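/- Let r ≥ 1 be an integer and let s ∈ ℂ with Re(s) > r. Then exp( ∫_{1}^{∞} (u−1)^r · u^{−s−1} · (log u)^{−1} du ) = Π_{k=0}^{r} (s−k)^{(−1)^{r−k+1} C(r,k)}, where each factor is an integer power (zpow) of the nonzero complex number s−k. -/

import Mathlib

set_option maxHeartbeats 1000000

open MeasureTheory Complex Set Filter Topology


private lemma azg_exp_int {b : ℝ} (hb : 0 < b) :
    ∫ x in Ioi (0:ℝ), Real.exp (-(b * x)) = b⁻¹ := by
  have h := integral_comp_mul_left_Ioi (fun y => Real.exp (-y)) 0 hb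
  simp only [mul_zero] at h
  rw [h, integral_exp_neg_Ioi_zero, smul_eq_mul, mul_one]

private lemma azg_ne_zero {z : ℂ} (h : 0 < z.re) : z ≠ 0 := by
  intro h0; rw [h0] at h; simp at h

private lemma azg_cpow_split (s : ℂ) {u : ℝ} (hu : 1 < u) (x : ℝ) :
    (u:ℂ) ^ (-s - x - 1) = (u:ℂ) ^ (-s - 1) * ((Real.exp (-(Real.log u * x)) : ℝ) : ℂ) := by
  have hu0 : (0:ℝ) < u := lt_trans one_pos hu
  have hune : (u:ℂ) ≠ 0 := by exact_mod_cast hu0.ne'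
  rw [show -s - (x:ℂ) - 1 = (-s - 1) + (((-x : ℝ)):ℂ) by push_cast; ring,
      cpow_add _ _ hune, ← Complex.ofReal_cpow hu0.le, Real.rpow_def_of_pos hu0, mul_neg]

private lemma azg_inner_x (r : ℕ) (s : ℂ) {u : ℝ} (hu : 1 < u) :
    ∫ x in Ioi (0:ℝ), ((u:ℂ) - 1) ^ r * (u:ℂ) ^ (-s - x - 1) =
      ((u:ℂ) - 1) ^ r * (u:ℂ) ^ (-s - 1) * ((Real.log u : ℝ) : ℂ)⁻¹ := by
  have hlog : 0 < Real.log u := Real.log_pos hu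
  calc ∫ x in Ioi (0:ℝ), ((u:ℂ) - 1) ^ r * (u:ℂ) ^ (-s - x - 1)
      = ∫ x in Ioi (0:ℝ), (((u:ℂ) - 1) ^ r * (u:ℂ) ^ (-s - 1)) *
          ((Real.exp (-(Real.log u * x)) : ℝ) : ℂ) := by
        apply integral_congr_ae
        filter_upwards with x
        rw [azg_cpow_split s hu x, mul_assoc]
    _ = (((u:ℂ) - 1) ^ r * (u:ℂ) ^ (-s - 1)) *
          ((∫ x in Ioi (0:ℝ), Real.exp (-(Real.log u * x)) : ℝ) : ℂ) := by
        rw [integral_const_mul]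
        congr 1
        exact integral_ofReal
    _ = ((u:ℂ) - 1) ^ r * (u:ℂ) ^ (-s - 1) * ((Real.log u : ℝ) : ℂ)⁻¹ := by
        rw [azg_exp_int hlog, Complex.ofReal_inv]


private lemma azg_binom_expand (r : ℕ) (w : ℂ) {u : ℝ} (hu : 1 < u) :
    ((u:ℂ) - 1) ^ r * (u:ℂ) ^ w =
      ∑ k ∈ Finset.range (r+1), (-1:ℂ) ^ (k+r) * (r.choose k) * (u:ℂ) ^ ((k:ℂ) + w) := by
  have hune : (u:ℂ) ≠ 0 := by
    have : (0:ℝ) < u := lt_trans one_pos hu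
    exact_mod_cast this.ne'
  rw [sub_pow, Finset.sum_mul]
  refine Finset.sum_congr rfl fun k hk => ?_
  rw [one_pow, cpow_add _ _ hune, cpow_natCast]
  ring

private lemma azg_inner_u (r : ℕ) (s : ℂ) (hs : (r : ℝ) < s.re) {x : ℝ} (hx : 0 < x) :
    ∫ u in Ioi (1:ℝ), ((u:ℂ) - 1) ^ r * (u:ℂ) ^ (-s - x - 1) =
      ∑ k ∈ Finset.range (r+1), (-1:ℂ) ^ (k+r) * (r.choose k) * (s + x - k)⁻¹ := by
  have hre : ∀ k ∈ Finset.range (r+1), ((k:ℂ) + (-s - x - 1)).re < -1 := by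
    intro k hk
    have hk' : (k:ℝ) ≤ r := by exact_mod_cast Nat.lt_succ_iff.mp (Finset.mem_range.mp hk)
    simp only [Complex.add_re, Complex.sub_re, Complex.neg_re, Complex.one_re,
      Complex.ofReal_re, Complex.natCast_re]
    linarith
  rw [setIntegral_congr_fun measurableSet_Ioi
    (fun u hu => azg_binom_expand r (-s - x - 1) hu)]
  rw [integral_finset_sum _ (fun k hk =>
    ((integrableOn_Ioi_cpow_of_lt (hre k hk) one_pos).const_mul _))]
  refine Finset.sum_congr rfl fun k hk => ?_
  rw [integral_const_mul, integral_Ioi_cpow_of_lt (hre k hk) one_pos]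
  congr 1
  rw [Complex.ofReal_one, one_cpow,
    show ((k:ℂ) + (-s - x - 1)) + 1 = -(s + x - k) by ring]
  rw [div_neg, neg_div, neg_neg, one_div]

private lemma azg_sum_c_zero (r : ℕ) (hr : 1 ≤ r) :
    ∑ k ∈ Finset.range (r+1), (-1:ℂ) ^ (k+r) * (r.choose k) = 0 := by
  have h := Int.alternating_sum_range_choose_of_ne (n := r) (by omega)
  calc ∑ k ∈ Finset.range (r+1), (-1:ℂ) ^ (k+r) * (r.choose k)
      = (-1:ℂ)^r * ∑ k ∈ Finset.range (r+1), (-1:ℂ)^k * (r.choose k) := by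
        rw [Finset.mul_sum]
        exact Finset.sum_congr rfl fun k _ => by rw [pow_add]; ring
    _ = 0 := by
        have : ∑ k ∈ Finset.range (r+1), (-1:ℂ)^k * (r.choose k)
            = ((∑ i ∈ Finset.range (r+1), (-1:ℤ)^i * (r.choose i) : ℤ) : ℂ) := by
          push_cast; rfl
        rw [this, h]; simp

private lemma azg_norm_F (r : ℕ) (s : ℂ) {u : ℝ} (hu : 1 < u) (x : ℝ) :
    ‖((u:ℂ) - 1) ^ r * (u:ℂ) ^ (-s - x - 1)‖ =
      ((u - 1) ^ r * u ^ (-s.re - 1)) * Real.exp (-(Real.log u * x)) := by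
  have hu0 : (0:ℝ) < u := lt_trans one_pos hu
  rw [norm_mul, norm_pow, show (u:ℂ) - 1 = ((u - 1 : ℝ) : ℂ) by push_cast; ring,
    Complex.norm_real, Real.norm_eq_abs, _root_.abs_of_nonneg (by linarith : (0:ℝ) ≤ u - 1),
    Complex.norm_cpow_eq_rpow_re_of_pos hu0]
  have : (-s - (x:ℂ) - 1).re = (-s.re - 1) + (-x) := by
    simp [Complex.sub_re, Complex.neg_re]; ring
  rw [this, Real.rpow_add hu0, Real.rpow_def_of_pos hu0 (-x), mul_neg]
  ring


private lemma azg_g0_le (r : ℕ) (hr : 1 ≤ r) (σ : ℝ) {u : ℝ} (hu : 1 < u) :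
    (u - 1) ^ r * u ^ (-σ - 1) * (Real.log u)⁻¹ ≤ u ^ ((r:ℝ) - σ - 1) := by
  have hu0 : (0:ℝ) < u := lt_trans one_pos hu
  have hlog : 0 < Real.log u := Real.log_pos hu
  have key : u - 1 ≤ u * Real.log u := by
    have h := Real.log_le_sub_one_of_pos (show (0:ℝ) < u⁻¹ by positivity)
    rw [Real.log_inv] at h
    have h2 := mul_le_mul_of_nonneg_left h hu0.le
    have h3 : u * u⁻¹ = 1 := mul_inv_cancel₀ hu0.ne'
    nlinarith
  have h1 : (u - 1)^r ≤ u^r * Real.log u := by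
    calc (u-1)^r = (u-1)^(r-1) * (u-1)^1 := by rw [← pow_add]; congr 1; omega
      _ ≤ u^(r-1) * (u * Real.log u) := by
          apply mul_le_mul (pow_le_pow_left₀ (by linarith) (by linarith) _)
            (by simpa using key) (by linarith) (by positivity)
      _ = u^r * Real.log u := by
          rw [← mul_assoc, ← pow_succ]
          congr 2
          omega
  have hrp : (0:ℝ) ≤ u ^ (-σ-1) := Real.rpow_nonneg hu0.le _
  calc (u - 1) ^ r * u ^ (-σ - 1) * (Real.log u)⁻¹
      ≤ (u^r * Real.log u) * u ^ (-σ - 1) * (Real.log u)⁻¹ := by gcongr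
    _ = u^r * u ^ (-σ - 1) := by field_simp
    _ = u ^ ((r:ℝ) - σ - 1) := by
        rw [← Real.rpow_natCast u r, ← Real.rpow_add hu0]
        ring_nf

private lemma azg_g0_int (r : ℕ) (hr : 1 ≤ r) (σ : ℝ) (hσ : (r:ℝ) < σ) :
    IntegrableOn (fun u : ℝ => (u - 1) ^ r * u ^ (-σ - 1) * (Real.log u)⁻¹) (Ioi 1) := by
  have hmeas : ContinuousOn (fun u : ℝ => (u - 1) ^ r * u ^ (-σ - 1) * (Real.log u)⁻¹)
      (Ioi 1) := by
    intro u hu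
    have hu1 : 1 < u := hu
    have hu0 : (0:ℝ) < u := lt_trans one_pos hu1
    apply ContinuousAt.continuousWithinAt
    apply ContinuousAt.mul
    · apply ContinuousAt.mul
      · exact (((continuous_id.sub continuous_const).pow r)).continuousAt
      · exact Real.continuousAt_rpow_const u _ (Or.inl hu0.ne')
    · exact ((Real.continuousAt_log hu0.ne').inv₀ (Real.log_pos hu1).ne')
  apply Integrable.mono (integrableOn_Ioi_rpow_of_lt (a := (r:ℝ) - σ - 1) (by linarith) one_pos)
    (hmeas.aestronglyMeasurable measurableSet_Ioi)
  filter_upwards [ae_restrict_mem measurableSet_Ioi] with u hu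
  have hu1 : (1:ℝ) < u := hu
  have hu0 : (0:ℝ) < u := lt_trans one_pos hu1
  have hlog : 0 < Real.log u := Real.log_pos hu1
  rw [Real.norm_eq_abs, Real.norm_eq_abs,
    _root_.abs_of_nonneg (mul_nonneg (mul_nonneg (pow_nonneg (by linarith) _) (Real.rpow_nonneg hu0.le _)) (inv_nonneg.mpr hlog.le)),
    _root_.abs_of_nonneg (Real.rpow_nonneg hu0.le _)]
  exact azg_g0_le r hr σ hu1

private noncomputable def azgF (r : ℕ) (s : ℂ) : ℝ × ℝ → ℂ :=
  fun p => ((p.1:ℂ) - 1) ^ r * (p.1:ℂ) ^ (-s - p.2 - 1)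

private lemma azgF_apply (r : ℕ) (s : ℂ) (u x : ℝ) :
    azgF r s (u, x) = ((u:ℂ) - 1) ^ r * (u:ℂ) ^ (-s - x - 1) := rfl

private noncomputable def azgH (r : ℕ) (s : ℂ) : ℝ → ℂ :=
  fun x => ∑ k ∈ Finset.range (r+1),
    (-1:ℂ) ^ (k+r) * (r.choose k) * Complex.log (s + x - k)

private lemma azgH_apply (r : ℕ) (s : ℂ) (x : ℝ) :
    azgH r s x = ∑ k ∈ Finset.range (r+1),
      (-1:ℂ) ^ (k+r) * (r.choose k) * Complex.log (s + x - k) := rfl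

private noncomputable def azgG (r : ℕ) (s : ℂ) : ℝ → ℂ :=
  fun x => ∑ k ∈ Finset.range (r+1), (-1:ℂ) ^ (k+r) * (r.choose k) * (s + x - k)⁻¹

-- measurability of F
private lemma azg_meas (r : ℕ) (s : ℂ) :
    AEStronglyMeasurable (azgF r s)
      ((volume.restrict (Ioi (1:ℝ))).prod (volume.restrict (Ioi (0:ℝ)))) := by
  rw [Measure.prod_restrict]
  apply ContinuousOn.aestronglyMeasurable ?_ (measurableSet_Ioi.prod measurableSet_Ioi)
  intro p hp
  have hp1 : (1:ℝ) < p.1 := hp.1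
  apply ContinuousAt.continuousWithinAt
  apply ContinuousAt.mul
  · exact (((Complex.continuous_ofReal.comp continuous_fst).sub continuous_const).pow
      r).continuousAt
  · apply ContinuousAt.cpow
    · exact (Complex.continuous_ofReal.comp continuous_fst).continuousAt
    · exact ((continuous_const.sub
        (Complex.continuous_ofReal.comp continuous_snd)).sub continuous_const).continuousAt
    · exact Complex.mem_slitPlane_iff.mpr (Or.inl (by simpa using lt_trans one_pos hp1))

-- integrability in x for fixed u
private lemma azg_x_int (r : ℕ) (s : ℂ) : ∀ u ∈ Ioi (1:ℝ),
    Integrable (fun x => azgF r s (u, x)) (volume.restrict (Ioi (0:ℝ))) := by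
  intro u hu
  have hu1 : (1:ℝ) < u := hu
  have hlog : 0 < Real.log u := Real.log_pos hu1
  apply Integrable.congr
    (((exp_neg_integrableOn_Ioi 0 hlog).ofReal (𝕜 := ℂ)).const_mul
      (((u:ℂ) - 1) ^ r * (u:ℂ) ^ (-s - 1)))
  filter_upwards with x
  rw [azgF_apply, azg_cpow_split s hu1 x, mul_assoc, neg_mul]
  rfl

-- product integrability
private lemma azg_prod_int (r : ℕ) (hr : 1 ≤ r) (s : ℂ) (hs : (r : ℝ) < s.re) :
    Integrable (azgF r s)
      ((volume.restrict (Ioi (1:ℝ))).prod (volume.restrict (Ioi (0:ℝ)))) := by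
  rw [integrable_prod_iff (azg_meas r s)]
  constructor
  · filter_upwards [ae_restrict_mem measurableSet_Ioi] with u hu using azg_x_int r s u hu
  · apply (azg_g0_int r hr s.re hs).congr
    filter_upwards [ae_restrict_mem measurableSet_Ioi] with u hu
    have hu1 : (1:ℝ) < u := hu
    have hlog : 0 < Real.log u := Real.log_pos hu1
    calc (u - 1) ^ r * u ^ (-s.re - 1) * (Real.log u)⁻¹
        = ((u - 1) ^ r * u ^ (-s.re - 1)) * ∫ x in Ioi (0:ℝ),
            Real.exp (-(Real.log u * x)) := by rw [azg_exp_int hlog, mul_assoc]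
      _ = ∫ x in Ioi (0:ℝ), ((u - 1) ^ r * u ^ (-s.re - 1)) *
            Real.exp (-(Real.log u * x)) := (integral_const_mul _ _).symm
      _ = ∫ x in Ioi (0:ℝ), ‖azgF r s (u, x)‖ := by
            apply integral_congr_ae
            filter_upwards with x
            rw [azgF_apply]
            exact (azg_norm_F r s hu1 x).symm

-- derivative of H
private lemma azg_H_deriv (r : ℕ) (s : ℂ) (hs : (r : ℝ) < s.re) :
    ∀ x ∈ Ici (0:ℝ), HasDerivAt (azgH r s) (azgG r s x) x := by
  intro x hx
  have hx0 : (0:ℝ) ≤ x := hx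
  apply HasDerivAt.fun_sum
  intro k hk
  have hk' : (k:ℝ) ≤ r := by
    exact_mod_cast Nat.lt_succ_iff.mp (Finset.mem_range.mp hk)
  have hre : 0 < (s + (x:ℂ) - (k:ℂ)).re := by
    simp only [Complex.add_re, Complex.sub_re, Complex.ofReal_re, Complex.natCast_re]
    linarith
  have h1 : HasDerivAt (fun z : ℂ => Complex.log (s + z - k)) ((s + (x:ℂ) - k)⁻¹) (x:ℂ) := by
    have haff : HasDerivAt (fun z : ℂ => s + z - k) 1 (x:ℂ) :=
      ((hasDerivAt_id _).const_add s).sub_const _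
    have hlog := Complex.hasDerivAt_log (Complex.mem_slitPlane_iff.mpr (Or.inl hre))
    simpa [Function.comp_def] using hlog.comp (x:ℂ) haff
  exact (h1.comp_ofReal).const_mul _

-- limit of H at infinity
private lemma azg_H_tendsto (r : ℕ) (hr : 1 ≤ r) (s : ℂ) (hs : (r : ℝ) < s.re) :
    Tendsto (azgH r s) atTop (𝓝 0) := by
  have h1 : azgH r s =ᶠ[atTop] fun x : ℝ =>
      ∑ k ∈ Finset.range (r+1), (-1:ℂ) ^ (k+r) * (r.choose k)
        * Complex.log (1 + (s - k) * ((x:ℂ))⁻¹) := by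
    filter_upwards [eventually_gt_atTop (0:ℝ)] with x hx
    have hxC : ((x:ℂ)) ≠ 0 := by exact_mod_cast hx.ne'
    have key : ∀ k ∈ Finset.range (r+1),
        Complex.log (s + x - k) = (Real.log x : ℂ)
          + Complex.log (1 + (s - k) * ((x:ℂ))⁻¹) := by
      intro k hk
      have hk' : (k:ℝ) ≤ r := by
        exact_mod_cast Nat.lt_succ_iff.mp (Finset.mem_range.mp hk)
      have hre2 : 0 < (1 + (s - k) * ((x:ℂ))⁻¹).re := by
        rw [show (1 + (s - k) * ((x:ℂ))⁻¹) = 1 + ((x⁻¹ : ℝ) : ℂ) * (s - k) by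
          rw [Complex.ofReal_inv]; ring]
        simp only [Complex.add_re, Complex.one_re, Complex.re_ofReal_mul,
          Complex.sub_re, Complex.natCast_re]
        have h5 : 0 < x⁻¹ * (s.re - k) := mul_pos (inv_pos.mpr hx) (by linarith)
        linarith
      rw [show s + (x:ℂ) - k = (x:ℝ) * (1 + (s - k) * ((x:ℂ))⁻¹) by field_simp; ring,
        Complex.log_ofReal_mul hx (azg_ne_zero hre2)]
    calc azgH r s x = ∑ k ∈ Finset.range (r+1), (-1:ℂ) ^ (k+r) * (r.choose k) *
          ((Real.log x : ℂ) + Complex.log (1 + (s - k) * ((x:ℂ))⁻¹)) := by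
          rw [azgH_apply]
          exact Finset.sum_congr rfl fun k hk => by rw [key k hk]
      _ = (∑ k ∈ Finset.range (r+1), (-1:ℂ) ^ (k+r) * (r.choose k)) * (Real.log x : ℂ)
            + ∑ k ∈ Finset.range (r+1), (-1:ℂ) ^ (k+r) * (r.choose k)
              * Complex.log (1 + (s - k) * ((x:ℂ))⁻¹) := by
          rw [Finset.sum_mul, ← Finset.sum_add_distrib]
          exact Finset.sum_congr rfl fun k hk => by ring
      _ = _ := by rw [azg_sum_c_zero r hr, zero_mul, zero_add]
  have h2 : Tendsto (fun x : ℝ =>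
      ∑ k ∈ Finset.range (r+1), (-1:ℂ) ^ (k+r) * (r.choose k)
        * Complex.log (1 + (s - k) * ((x:ℂ))⁻¹)) atTop (𝓝 0) := by
    have hterm : ∀ k : ℕ, Tendsto
        (fun x : ℝ => (-1:ℂ) ^ (k+r) * (r.choose k)
          * Complex.log (1 + (s - k) * ((x:ℂ))⁻¹)) atTop (𝓝 0) := by
      intro k
      have hinv : Tendsto (fun x : ℝ => ((x:ℂ))⁻¹) atTop (𝓝 0) := by
        have h3 : Tendsto (fun x : ℝ => ((x⁻¹ : ℝ) : ℂ)) atTop (𝓝 ((0:ℝ):ℂ)) :=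
          (Complex.continuous_ofReal.tendsto (0:ℝ)).comp tendsto_inv_atTop_zero
        simpa [Complex.ofReal_inv] using h3
      have harg : Tendsto (fun x : ℝ => 1 + (s - k) * ((x:ℂ))⁻¹) atTop (𝓝 1) := by
        have h4 := (hinv.const_mul (s - (k:ℂ))).const_add 1
        simpa using h4
      have hcont : ContinuousAt Complex.log 1 :=
        continuousAt_clog (Complex.mem_slitPlane_iff.mpr (Or.inl (by simp)))
      have h5 := (hcont.tendsto.comp harg).const_mul ((-1:ℂ) ^ (k+r) * (r.choose k : ℂ))
      simpa [Complex.log_one] using h5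
    have h6 := tendsto_finset_sum (Finset.range (r+1)) (fun k (_ : k ∈ Finset.range (r+1)) => hterm k)
    simpa using h6
  exact h2.congr' h1.symm

theorem absolute_zeta_Gm_tensor (r : ℕ) (hr : 1 ≤ r) (s : ℂ) (hs : (r : ℝ) < s.re) :
    Complex.exp (∫ u in Set.Ioi (1 : ℝ),
        ((u : ℂ) - 1) ^ r * (u : ℂ) ^ (-s - 1) * (Real.log u : ℂ)⁻¹) =
    ∏ k ∈ Finset.range (r + 1),
      (s - (k : ℂ)) ^ ((-1 : ℤ) ^ (r - k + 1) * (r.choose k : ℤ)) := by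
  have hF_int := azg_prod_int r hr s hs
  -- the target integral as an iterated integral
  have hI1 : (∫ u in Set.Ioi (1 : ℝ),
        ((u : ℂ) - 1) ^ r * (u : ℂ) ^ (-s - 1) * (Real.log u : ℂ)⁻¹)
      = ∫ u in Ioi (1:ℝ), ∫ x in Ioi (0:ℝ), azgF r s (u, x) := by
    apply setIntegral_congr_fun measurableSet_Ioi
    intro u hu
    simp only [azgF_apply]
    exact (azg_inner_x r s hu).symm
  -- Fubini
  have hswap : (∫ u in Ioi (1:ℝ), ∫ x in Ioi (0:ℝ), azgF r s (u, x))
      = ∫ x in Ioi (0:ℝ), ∫ u in Ioi (1:ℝ), azgF r s (u, x) :=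
    integral_integral_swap (f := fun u x => azgF r s (u, x)) hF_int
  -- identify the inner u-integral
  have hg1 : (∫ x in Ioi (0:ℝ), ∫ u in Ioi (1:ℝ), azgF r s (u, x))
      = ∫ x in Ioi (0:ℝ), azgG r s x := by
    apply setIntegral_congr_fun measurableSet_Ioi
    intro x hx
    simp only [azgF_apply]
    exact azg_inner_u r s hs hx
  -- integrability of g
  have hg_int : IntegrableOn (azgG r s) (Ioi (0:ℝ)) := by
    apply (hF_int.integral_prod_right).congr
    filter_upwards [ae_restrict_mem measurableSet_Ioi] with x hx
    exact azg_inner_u r s hs hx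
  -- FTC on (0, ∞)
  have hFTC : (∫ x in Ioi (0:ℝ), azgG r s x) = 0 - azgH r s 0 :=
    integral_Ioi_of_hasDerivAt_of_tendsto' (azg_H_deriv r s hs) hg_int
      (azg_H_tendsto r hr s hs)
  rw [hI1, hswap, hg1, hFTC]
  -- compute the exponential
  have hH0 : (0:ℂ) - azgH r s 0 = ∑ k ∈ Finset.range (r+1),
      (-((-1:ℂ) ^ (k+r) * (r.choose k))) * Complex.log (s - k) := by
    rw [zero_sub, azgH_apply]
    simp only [← Finset.sum_neg_distrib]
    refine Finset.sum_congr rfl fun k _ => ?_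
    rw [Complex.ofReal_zero, add_zero, neg_mul]
  rw [hH0, Complex.exp_sum]
  refine Finset.prod_congr rfl fun k hk => ?_
  have hk' : k ≤ r := Nat.lt_succ_iff.mp (Finset.mem_range.mp hk)
  have hkR : (k:ℝ) ≤ r := by exact_mod_cast hk'
  have hz : s - (k:ℂ) ≠ 0 := by
    apply azg_ne_zero
    simp only [Complex.sub_re, Complex.natCast_re]
    linarith
  have hcast : (-((-1:ℂ) ^ (k+r) * (r.choose k)))
      = (((-1:ℤ) ^ (r-k+1) * (r.choose k : ℤ) : ℤ) : ℂ) := by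
    push_cast
    have hpar : (-1:ℂ) ^ (k+r+1) = (-1:ℂ) ^ (r-k+1) := by
      rw [show k + r + 1 = (r - k + 1) + 2 * k by omega, pow_add, pow_mul]
      norm_num
    rw [← hpar, pow_succ]
    ring
  rw [hcast, Complex.exp_int_mul, Complex.exp_log hz]
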